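/- For every z > 0, ∫_{−1}^{0} ∫_{−ξ z}^{∞} σ^{−4} (1 + ξ z/σ)^{−(1+1/ξ)} dσ dξ = 2 z^{−3} ln(3/2). -/

import Mathlib

open MeasureTheory Real Set
open scoped ENNReal

lemma gp_beta_integral (p : ℝ) (hp : 0 < p) :
    ∫ u in (0:ℝ)..1, (1 - u) ^ 2 * u ^ p
      = 1 / (p + 1) - 2 / (p + 2) + 1 / (p + 3) := by
  have h1 : ∀ u ∈ Set.uIcc (0:ℝ) 1,
      (1 - u) ^ 2 * u ^ p = u ^ p - 2 * u ^ (p + 1) + u ^ (p + 2) := by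
    intro u hu
    rcases eq_or_ne u 0 with rfl | hu0
    · rw [Real.zero_rpow hp.ne', Real.zero_rpow (by linarith), Real.zero_rpow (by linarith)]
      ring
    · have hu' : 0 < u := by
        rcases (Set.uIcc_of_le (by norm_num : (0:ℝ) ≤ 1) ▸ hu) with ⟨h0, h1⟩
        exact lt_of_le_of_ne h0 (Ne.symm hu0)
      have e1 : u ^ (p + 1) = u ^ p * u := by
        rw [Real.rpow_add hu', Real.rpow_one]
      have e2 : u ^ (p + 2) = u ^ p * u ^ 2 := by
        rw [Real.rpow_add hu', show (2:ℝ) = ((2:ℕ):ℝ) by norm_num, Real.rpow_natCast]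
      rw [e1, e2]; ring
  rw [intervalIntegral.integral_congr h1]
  have i1 : IntervalIntegrable (fun u : ℝ => u ^ p) volume 0 1 :=
    intervalIntegral.intervalIntegrable_rpow' (by linarith)
  have i2 : IntervalIntegrable (fun u : ℝ => u ^ (p + 1)) volume 0 1 :=
    intervalIntegral.intervalIntegrable_rpow' (by linarith)
  have i3 : IntervalIntegrable (fun u : ℝ => u ^ (p + 2)) volume 0 1 :=
    intervalIntegral.intervalIntegrable_rpow' (by linarith)
  rw [intervalIntegral.integral_add (i1.sub (i2.const_mul 2)) i3,
    intervalIntegral.integral_sub i1 (i2.const_mul 2),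
    intervalIntegral.integral_const_mul,
    integral_rpow (Or.inl (by linarith)), integral_rpow (Or.inl (by linarith)),
    integral_rpow (Or.inl (by linarith))]
  rw [Real.one_rpow, Real.one_rpow, Real.one_rpow,
    Real.zero_rpow (by linarith : p + 1 ≠ 0),
    Real.zero_rpow (by linarith : p + 1 + 1 ≠ 0),
    Real.zero_rpow (by linarith : p + 2 + 1 ≠ 0)]
  have : p + 1 + 1 = p + 2 := by ring
  rw [this]
  have : p + 2 + 1 = p + 3 := by ring
  rw [this]
  ring

lemma gp_inner_integral (a p : ℝ) (ha : 0 < a) (hp : 0 < p) :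
    ∫⁻ σ in Set.Ioi a, ENNReal.ofReal ((σ ^ 4)⁻¹ * (1 - a / σ) ^ p)
      = ENNReal.ofReal ((a ^ 3)⁻¹ * (1 / (p + 1) - 2 / (p + 2) + 1 / (p + 3))) := by
  set g : ℝ → ℝ := fun σ => (σ ^ 4)⁻¹ * (1 - a / σ) ^ p with hg
  set f : ℝ → ℝ := fun u => a / (1 - u) with hf
  set f' : ℝ → ℝ := fun u => a / (1 - u) ^ 2 with hf'
  have hs : MeasurableSet (Set.Ioo (0:ℝ) 1) := measurableSet_Ioo
  have hderiv : ∀ u ∈ Set.Ioo (0:ℝ) 1, HasDerivWithinAt f (f' u) (Set.Ioo 0 1) u := by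
    intro u hu
    have h1 : (0:ℝ) < 1 - u := by linarith [hu.2]
    have hd : HasDerivAt (fun v : ℝ => 1 - v) (-1) u := by
      simpa using (hasDerivAt_id' u).const_sub (1:ℝ)
    have := (hasDerivAt_const u a).div hd h1.ne'
    have h2 : HasDerivAt f (f' u) u := by
      have e : f' u = (0 * (1 - u) - a * -1) / (1 - u) ^ 2 := by
        show a / (1 - u) ^ 2 = _
        ring
      rw [e]
      exact this
    exact h2.hasDerivWithinAt
  have hinj : Set.InjOn f (Set.Ioo (0:ℝ) 1) := by
    intro u hu v hv h
    have hu1 : (0:ℝ) < 1 - u := by linarith [hu.2]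
    have hv1 : (0:ℝ) < 1 - v := by linarith [hv.2]
    simp only [hf] at h
    rw [div_eq_div_iff hu1.ne' hv1.ne'] at h
    nlinarith
  have himg : f '' Set.Ioo 0 1 = Set.Ioi a := by
    ext σ
    constructor
    · rintro ⟨u, hu, rfl⟩
      have hu1 : (0:ℝ) < 1 - u := by linarith [hu.2]
      simp only [Set.mem_Ioi, hf]
      rw [lt_div_iff₀ hu1]
      nlinarith [hu.1]
    · intro hσ
      rw [Set.mem_Ioi] at hσ
      have hσ' : 0 < σ := ha.trans hσ
      refine ⟨1 - a / σ, ⟨?_, ?_⟩, ?_⟩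
      · have : 0 < a / σ := div_pos ha hσ'
        have h2 : a / σ < 1 := (div_lt_one hσ').mpr hσ
        linarith
      · have : 0 < a / σ := div_pos ha hσ'
        linarith
      · simp only [hf]
        rw [sub_sub_cancel, div_div_eq_mul_div, mul_comm a σ, mul_div_assoc,
          div_self ha.ne', mul_one]
  have heq : Set.EqOn (fun u => (a ^ 3)⁻¹ * ((1 - u) ^ 2 * u ^ p))
      (fun u => |f' u| • g (f u)) (Set.Ioo (0:ℝ) 1) := by
    intro u hu
    have hu1 : (0:ℝ) < 1 - u := by linarith [hu.2]
    have hbase : 1 - a / f u = u := by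
      simp only [hf]
      rw [div_div_eq_mul_div, mul_comm a (1 - u), mul_div_assoc,
        div_self ha.ne', mul_one]
      ring
    simp only [smul_eq_mul, hg, hbase]
    simp only [hf', hf]
    rw [abs_of_pos (div_pos ha (by positivity))]
    field_simp
  have hcont : ContinuousOn (fun u : ℝ => (a ^ 3)⁻¹ * ((1 - u) ^ 2 * u ^ p))
      (Set.Icc 0 1) := by
    apply continuousOn_const.mul
    apply ContinuousOn.mul (by fun_prop)
    intro x _
    exact (Real.continuousAt_rpow_const x p (Or.inr hp.le)).continuousWithinAt
  have hint : IntegrableOn (fun u : ℝ => (a ^ 3)⁻¹ * ((1 - u) ^ 2 * u ^ p))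
      (Set.Ioo 0 1) := (hcont.integrableOn_Icc).mono_set Set.Ioo_subset_Icc_self
  have htrans : IntegrableOn (fun u => |f' u| • g (f u)) (Set.Ioo (0:ℝ) 1) :=
    hint.congr_fun heq hs
  have hgint : IntegrableOn g (Set.Ioi a) := by
    rw [← himg]
    exact (integrableOn_image_iff_integrableOn_abs_deriv_smul hs hderiv hinj g).mpr htrans
  have hnn : 0 ≤ᵐ[volume.restrict (Set.Ioi a)] g := by
    rw [Filter.EventuallyLE, ae_restrict_iff' measurableSet_Ioi]
    filter_upwards with σ hσ
    simp only [Pi.zero_apply]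
    rw [Set.mem_Ioi] at hσ
    have hσ' : 0 < σ := ha.trans hσ
    have h2 : a / σ < 1 := (div_lt_one hσ').mpr hσ
    exact mul_nonneg (by positivity) (Real.rpow_nonneg (by linarith) p)
  rw [← ofReal_integral_eq_lintegral_ofReal hgint hnn]
  congr 1
  rw [← himg, integral_image_eq_integral_abs_deriv_smul hs hderiv hinj g,
    ← setIntegral_congr_fun hs heq, MeasureTheory.integral_const_mul,
    ← integral_Ioc_eq_integral_Ioo,
    ← intervalIntegral.integral_of_le (by norm_num : (0:ℝ) ≤ 1),
    gp_beta_integral p hp]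

/-- For every `z > 0`,
`∫_{-1}^0 ∫_{-ξz}^∞ σ^{-4} (1 + ξ z/σ)^{-(1+1/ξ)} dσ dξ = 2 z^{-3} ln(3/2)`. -/
theorem gp_I2_integral (z : ℝ) (hz : 0 < z) :
    ∫⁻ ξ in Set.Ioo (-1 : ℝ) 0,
        ∫⁻ σ in Set.Ioi (-ξ * z),
          ENNReal.ofReal (σ ^ (-(4 : ℝ)) * (1 + ξ * z / σ) ^ (-(1 + 1 / ξ)))
      = ENNReal.ofReal (2 * z ^ (-(3 : ℝ)) * Real.log (3 / 2)) := by
  have key : ∀ ξ ∈ Set.Ioo (-1 : ℝ) 0,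
      (∫⁻ σ in Set.Ioi (-ξ * z),
          ENNReal.ofReal (σ ^ (-(4 : ℝ)) * (1 + ξ * z / σ) ^ (-(1 + 1 / ξ))))
        = ENNReal.ofReal (2 * (z ^ 3)⁻¹ / ((1 - ξ) * (1 - 2 * ξ))) := by
    intro ξ hξ
    obtain ⟨hξ1, hξ2⟩ := hξ
    have hξ0 : ξ ≠ 0 := hξ2.ne
    have ha : 0 < -ξ * z := mul_pos (neg_pos.mpr hξ2) hz
    have hp : 0 < -(1 + 1 / ξ) := by
      have h : 1 / ξ < -1 := by
        rw [div_lt_iff_of_neg hξ2]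
        linarith
      linarith
    have hcongr : ∀ σ ∈ Set.Ioi (-ξ * z),
        ENNReal.ofReal (σ ^ (-(4 : ℝ)) * (1 + ξ * z / σ) ^ (-(1 + 1 / ξ)))
          = ENNReal.ofReal ((σ ^ 4)⁻¹ * (1 - (-ξ * z) / σ) ^ (-(1 + 1 / ξ))) := by
      intro σ hσ
      rw [Set.mem_Ioi] at hσ
      have hσ' : 0 < σ := ha.trans hσ
      have e1 : σ ^ (-(4 : ℝ)) = (σ ^ 4)⁻¹ := by
        rw [Real.rpow_neg hσ'.le]
        congr 1
        rw [show (4:ℝ) = ((4:ℕ):ℝ) by norm_num, Real.rpow_natCast]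
      have e2 : 1 + ξ * z / σ = 1 - (-ξ * z) / σ := by ring
      rw [e1, e2]
    rw [setLIntegral_congr_fun measurableSet_Ioi hcongr,
      gp_inner_integral (-ξ * z) (-(1 + 1 / ξ)) ha hp]
    congr 1
    have h1 : (1:ℝ) - ξ ≠ 0 := by linarith
    have h2 : (1:ℝ) - 2 * ξ ≠ 0 := by linarith
    have hinv : 1 / ξ < 0 := div_neg_of_pos_of_neg one_pos hξ2
    have h3 : -(1 + 1 / ξ) + 1 ≠ 0 := ne_of_gt (by linarith)
    have h4 : -(1 + 1 / ξ) + 2 ≠ 0 := ne_of_gt (by linarith)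
    have h5 : -(1 + 1 / ξ) + 3 ≠ 0 := ne_of_gt (by linarith)
    have h1' : (-1 : ℝ) + ξ ≠ 0 := by intro h; apply h1; linarith
    have h2' : (-1 : ℝ) + ξ * 2 ≠ 0 := by intro h; apply h2; linarith
    rw [show -(1 + 1 / ξ) + 1 = -1 / ξ by ring, show -(1 + 1 / ξ) + 2 = (ξ - 1) / ξ by field_simp; ring,
      show -(1 + 1 / ξ) + 3 = (2 * ξ - 1) / ξ by field_simp; ring]
    have h1'' : ξ - 1 ≠ 0 := by intro h; apply h1; linarith
    have h2'' : 2 * ξ - 1 ≠ 0 := by intro h; apply h2; linarith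
    have h3' : (1 : ℝ) - ξ * 2 ≠ 0 := by intro h; apply h2; linarith
    field_simp [h1', h2', h3']
    linear_combination (-(1 - ξ) ^ 2) * mul_inv_cancel₀ h2'
  rw [setLIntegral_congr_fun measurableSet_Ioo key]
  set G : ℝ → ℝ := fun ξ => 2 * (z ^ 3)⁻¹ / ((1 - ξ) * (1 - 2 * ξ)) with hG
  have hGc : ContinuousOn G (Set.Icc (-1 : ℝ) 0) := by
    apply ContinuousOn.div continuousOn_const (by fun_prop)
    intro x hx
    have h1 : (0:ℝ) < 1 - x := by linarith [hx.2]
    have h2 : (0:ℝ) < 1 - 2 * x := by linarith [hx.2]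
    positivity
  have hGint : IntegrableOn G (Set.Ioo (-1:ℝ) 0) :=
    (hGc.integrableOn_Icc).mono_set Set.Ioo_subset_Icc_self
  have hGnn : 0 ≤ᵐ[volume.restrict (Set.Ioo (-1:ℝ) 0)] G := by
    rw [Filter.EventuallyLE, ae_restrict_iff' measurableSet_Ioo]
    filter_upwards with ξ hξ
    simp only [Pi.zero_apply, hG]
    have h1 : (0:ℝ) < 1 - ξ := by linarith [hξ.2]
    have h2 : (0:ℝ) < 1 - 2 * ξ := by linarith [hξ.2]
    positivity
  rw [← ofReal_integral_eq_lintegral_ofReal hGint hGnn]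
  congr 1
  have hioo : ∫ ξ in Set.Ioo (-1:ℝ) 0, G ξ = ∫ ξ in (-1:ℝ)..0, G ξ := by
    rw [← integral_Ioc_eq_integral_Ioo,
      ← intervalIntegral.integral_of_le (by norm_num : (-1:ℝ) ≤ 0)]
  rw [hioo]
  have hd : ∀ ξ ∈ Set.uIcc (-1:ℝ) 0,
      HasDerivAt (fun ξ => Real.log (1 - ξ) - Real.log (1 - 2 * ξ))
        (((1 - ξ) * (1 - 2 * ξ))⁻¹) ξ := by
    intro ξ hξ
    rw [Set.uIcc_of_le (by norm_num : (-1:ℝ) ≤ 0)] at hξ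
    have h1 : (0:ℝ) < 1 - ξ := by linarith [hξ.2]
    have h2 : (0:ℝ) < 1 - 2 * ξ := by linarith [hξ.2]
    have h1d : HasDerivAt (fun ξ : ℝ => 1 - ξ) (-1) ξ := by
      simpa using (hasDerivAt_id' ξ).const_sub (1:ℝ)
    have h2d : HasDerivAt (fun ξ : ℝ => 1 - 2 * ξ) (-2) ξ := by
      simpa using ((hasDerivAt_id' ξ).const_mul (2:ℝ)).const_sub (1:ℝ)
    have hl1 := h1d.log h1.ne'
    have hl2 := h2d.log h2.ne'
    have e : ((1 - ξ) * (1 - 2 * ξ))⁻¹ = -1 / (1 - ξ) - -2 / (1 - 2 * ξ) := by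
      rw [div_sub_div _ _ h1.ne' h2.ne', mul_inv]
      field_simp
      ring
    rw [e]
    exact hl1.sub hl2
  have hcont : ContinuousOn (fun ξ : ℝ => ((1 - ξ) * (1 - 2 * ξ))⁻¹)
      (Set.uIcc (-1:ℝ) 0) := by
    apply ContinuousOn.inv₀ (by fun_prop)
    intro x hx
    rw [Set.uIcc_of_le (by norm_num : (-1:ℝ) ≤ 0)] at hx
    have h1 : (0:ℝ) < 1 - x := by linarith [hx.2]
    have h2 : (0:ℝ) < 1 - 2 * x := by linarith [hx.2]
    positivity
  have hFTC : ∫ ξ in (-1:ℝ)..0, ((1 - ξ) * (1 - 2 * ξ))⁻¹ = Real.log (3 / 2) := by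
    rw [intervalIntegral.integral_eq_sub_of_hasDerivAt hd
      (hcont.intervalIntegrable)]
    norm_num
    rw [Real.log_div (by norm_num) (by norm_num)]
  have hGsplit : ∀ ξ : ℝ, G ξ = 2 * (z ^ 3)⁻¹ * ((1 - ξ) * (1 - 2 * ξ))⁻¹ := by
    intro ξ; simp only [hG, div_eq_mul_inv]
  simp_rw [hGsplit]
  rw [intervalIntegral.integral_const_mul, hFTC]
  rw [Real.rpow_neg hz.le, show (3:ℝ) = ((3:ℕ):ℝ) by norm_num, Real.rpow_natCast]
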